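/- Let S be the swap matrix on ℂ^n ⊗ ℂ^n (entries S (i,j) (k,l) = 1 if i = l and j = k, else 0), let θ be real, and set U = (cos θ) • 1 + (i · sin θ) • S. Then for all n×n complex matrices ρ, Π, D: trace((Π ⊗ₖ D) * U * (ρ ⊗ₖ ((1/n) • 1)) * Uᴴ) = (1/n) · [ (cos θ)^2 · trace(ρ*Π) · trace(D) + (sin θ)^2 · trace(Π) · trace(D*ρ) + i · cos θ · sin θ · trace((ρ*Π − Π*ρ) * D) ]. -/
import Mathlib


open scoped Matrix Kronecker

/-- The swap matrix on `ℂ^n ⊗ ℂ^n`. -/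
def swapMatrix (n : ℕ) : Matrix (Fin n × Fin n) (Fin n × Fin n) ℂ :=
  fun p q => if p.1 = q.2 ∧ p.2 = q.1 then 1 else 0

section Helpers
variable {n : ℕ}


lemma swap_conjTranspose : (swapMatrix n)ᴴ = swapMatrix n := by
  ext ⟨i,j⟩ ⟨k,l⟩
  simp [swapMatrix, Matrix.conjTranspose_apply, apply_ite (star : ℂ → ℂ), and_comm, eq_comm]

lemma mul_swap_apply (M : Matrix (Fin n × Fin n) (Fin n × Fin n) ℂ) (p : Fin n × Fin n)
    (k l : Fin n) : (M * swapMatrix n) p (k, l) = M p (l, k) := by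
  rw [Matrix.mul_apply, Finset.sum_eq_single (l, k)]
  · simp [swapMatrix]
  · intro b _ hb
    have : ¬ (b.1 = l ∧ b.2 = k) := by
      simpa [Prod.ext_iff] using hb
    simp [swapMatrix, this]
  · simp

lemma swap_mul_apply (M : Matrix (Fin n × Fin n) (Fin n × Fin n) ℂ) (i j : Fin n)
    (q : Fin n × Fin n) : (swapMatrix n * M) (i, j) q = M (j, i) q := by
  rw [Matrix.mul_apply, Finset.sum_eq_single (j, i)]
  · simp [swapMatrix]
  · intro b _ hb
    have : ¬ (i = b.2 ∧ j = b.1) := by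
      simp only [ne_eq, Prod.ext_iff, not_and] at hb
      rintro ⟨h1, h2⟩
      exact hb h2.symm h1.symm
    simp [swapMatrix, this]
  · simp

lemma swap_conj (X Y : Matrix (Fin n) (Fin n) ℂ) :
    swapMatrix n * (X ⊗ₖ Y) * swapMatrix n = Y ⊗ₖ X := by
  ext ⟨i,j⟩ ⟨k,l⟩
  rw [Matrix.mul_assoc]
  rw [swap_mul_apply, mul_swap_apply]
  simp [Matrix.kroneckerMap_apply, mul_comm]

lemma trace_kron_swap (X Y : Matrix (Fin n) (Fin n) ℂ) :
    Matrix.trace ((X ⊗ₖ Y) * swapMatrix n) = Matrix.trace (X * Y) := by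
  simp only [Matrix.trace]
  rw [Fintype.sum_prod_type]
  simp only [Matrix.diag_apply]
  have h : ∀ i j : Fin n, ((X ⊗ₖ Y) * swapMatrix n) (i, j) (i, j) = X i j * Y j i := by
    intro i j; rw [mul_swap_apply]; simp [Matrix.kroneckerMap_apply]
  simp only [h]
  simp only [Matrix.trace, Matrix.diag_apply, Matrix.mul_apply]

end Helpers

/-- The (unnormalised) conditional environment operator after a measurement with POVM
element `P` at the causal break, in weak form against an environment observable `D`. -/
theorem partial_swap_conditional_env {n : ℕ} (θ : ℝ)
    (U : Matrix (Fin n × Fin n) (Fin n × Fin n) ℂ)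
    (hU : U = (Real.cos θ : ℂ) • (1 : Matrix (Fin n × Fin n) (Fin n × Fin n) ℂ)
        + (Complex.I * (Real.sin θ : ℂ)) • swapMatrix n)
    (ρ P D : Matrix (Fin n) (Fin n) ℂ) :
    Matrix.trace ((P ⊗ₖ D) * U *
        (ρ ⊗ₖ (((1 : ℂ) / n) • (1 : Matrix (Fin n) (Fin n) ℂ))) * Uᴴ) =
      (1 / (n : ℂ)) *
        ((Real.cos θ : ℂ) ^ 2 * Matrix.trace (ρ * P) * Matrix.trace D
          + (Real.sin θ : ℂ) ^ 2 * Matrix.trace P * Matrix.trace (D * ρ)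
          + Complex.I * (Real.cos θ : ℂ) * (Real.sin θ : ℂ) *
              Matrix.trace ((ρ * P - P * ρ) * D)) := by
  subst hU
  have hUH : ((Real.cos θ : ℂ) • (1 : Matrix (Fin n × Fin n) (Fin n × Fin n) ℂ)
        + (Complex.I * (Real.sin θ : ℂ)) • swapMatrix n)ᴴ
      = (Real.cos θ : ℂ) • (1 : Matrix (Fin n × Fin n) (Fin n × Fin n) ℂ)
        + (-(Complex.I * (Real.sin θ : ℂ))) • swapMatrix n := by
    simp [-Complex.ofReal_cos, -Complex.ofReal_sin, Matrix.conjTranspose_add,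
      Matrix.conjTranspose_smul, swap_conjTranspose, Complex.conj_ofReal, neg_mul]
  rw [hUH]
  simp only [Matrix.mul_add, Matrix.add_mul, Matrix.mul_smul, Matrix.smul_mul,
    Matrix.mul_one, Matrix.one_mul, Matrix.trace_add, Matrix.trace_smul, smul_eq_mul]
  have h1 : Matrix.trace ((P ⊗ₖ D) * (ρ ⊗ₖ (((1:ℂ)/n) • (1 : Matrix (Fin n) (Fin n) ℂ))))
      = (1/(n:ℂ)) * (Matrix.trace (ρ * P) * Matrix.trace D) := by
    rw [← Matrix.mul_kronecker_mul, Matrix.trace_kronecker, Matrix.mul_smul, Matrix.mul_one,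
      Matrix.trace_smul, Matrix.trace_mul_comm, smul_eq_mul]
    ring
  have h2 : Matrix.trace ((P ⊗ₖ D) * swapMatrix n *
        (ρ ⊗ₖ (((1:ℂ)/n) • (1 : Matrix (Fin n) (Fin n) ℂ))))
      = (1/(n:ℂ)) * Matrix.trace (ρ * P * D) := by
    rw [Matrix.trace_mul_comm, ← Matrix.mul_assoc, ← Matrix.mul_kronecker_mul,
      trace_kron_swap, Matrix.smul_mul, Matrix.one_mul, Matrix.mul_smul, Matrix.trace_smul,
      smul_eq_mul]
  have h3 : Matrix.trace ((P ⊗ₖ D) *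
        (ρ ⊗ₖ (((1:ℂ)/n) • (1 : Matrix (Fin n) (Fin n) ℂ))) * swapMatrix n)
      = (1/(n:ℂ)) * Matrix.trace (P * ρ * D) := by
    rw [← Matrix.mul_kronecker_mul, trace_kron_swap, Matrix.mul_smul, Matrix.mul_one,
      Matrix.mul_smul, Matrix.trace_smul, smul_eq_mul]
  have h4 : Matrix.trace ((P ⊗ₖ D) * swapMatrix n *
        (ρ ⊗ₖ (((1:ℂ)/n) • (1 : Matrix (Fin n) (Fin n) ℂ))) * swapMatrix n)
      = (1/(n:ℂ)) * (Matrix.trace P * Matrix.trace (D * ρ)) := by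
    rw [Matrix.mul_assoc (P ⊗ₖ D) (swapMatrix n), Matrix.mul_assoc (P ⊗ₖ D),
      swap_conj, ← Matrix.mul_kronecker_mul,
      Matrix.trace_kronecker, Matrix.mul_smul, Matrix.mul_one, Matrix.trace_smul, smul_eq_mul]
    ring
  have h5 : Matrix.trace ((ρ * P - P * ρ) * D)
      = Matrix.trace (ρ * P * D) - Matrix.trace (P * ρ * D) := by
    rw [Matrix.sub_mul, Matrix.trace_sub]
  rw [h1, h2, h3, h4, h5]
  linear_combination (-((Real.sin θ : ℂ))^2 * (1/(n:ℂ)) * Matrix.trace P *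
    Matrix.trace (D * ρ)) * Complex.I_sq
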